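/- Let G be a finite soluble group in which every element has prime power order. Then the order of G is divisible by at most two primes. -/

import Mathlib

open Finset

section Abstract

variable {G : Type*} [Group G]

lemma fact1_aux {V : Type*} [CommGroup V] (φ : G →* MulAut V) (e : ℕ) [NeZero e]
    (w : G) (hw : w ^ e = 1) (hf : ∀ m : V, φ w m = m → m = 1) (ν : V) :
    ∏ k : ZMod e, φ (w ^ (k.val)) ν = 1 := by
  have hpow : ∀ m : ℕ, w ^ m = w ^ (m % e) := by
    intro m
    conv_lhs => rw [← Nat.div_add_mod m e]
    rw [pow_add, pow_mul, hw, one_pow, one_mul]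
  have hW : ∀ k : ZMod e, w ^ (k + 1).val = w * w ^ k.val := by
    intro k
    rw [add_comm k 1, ZMod.val_add, ← hpow, pow_add, ZMod.val_one_eq_one_mod, ← hpow, pow_one]
  apply hf
  calc (φ w) (∏ k : ZMod e, φ (w ^ (k.val)) ν)
      = ∏ k : ZMod e, φ (w ^ ((k + 1).val)) ν := by
        rw [map_prod]
        refine Finset.prod_congr rfl fun k _ => ?_
        rw [hW k, map_mul, MulAut.mul_apply]
    _ = ∏ k : ZMod e, φ (w ^ (k.val)) ν :=
        Equiv.prod_comp (Equiv.addRight (1 : ZMod e)) (fun k => φ (w ^ (k.val)) ν)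

lemma CD_abstract {V : Type*} [CommGroup V] (φ : G →* MulAut V) {r e s : ℕ}
    (hr : r.Prime) (he : 0 < e) {a b : G} (ha : a ^ r = 1) (hb : b * a * b⁻¹ = a ^ s)
    (hbe : b ^ e = 1)
    (hci : ∀ i, 0 < i → i < e → ¬ r ∣ ∑ t ∈ range i, s ^ t)
    (hce : r ∣ ∑ t ∈ range e, s ^ t)
    (hfa : ∀ m : V, φ a m = m → m = 1)
    (hfab : ∀ k : ℕ, k < r → ∀ m : V, φ (a ^ k * b) m = m → m = 1)
    (n : V) : n ^ r = 1 := by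
  haveI : Fact r.Prime := ⟨hr⟩
  haveI : NeZero e := ⟨he.ne'⟩
  haveI : NeZero r := ⟨hr.pos.ne'⟩
  have hpa : ∀ m : ℕ, a ^ m = a ^ (m % r) := by
    intro m
    conv_lhs => rw [← Nat.div_add_mod m r]
    rw [pow_add, pow_mul, ha, one_pow, one_mul]
  have hconj : ∀ i : ℕ, b ^ i * a * (b ^ i)⁻¹ = a ^ (s ^ i) := by
    intro i
    induction i with
    | zero => simp
    | succ i ih =>
      calc b ^ (i + 1) * a * (b ^ (i + 1))⁻¹
          = b * (b ^ i * a * (b ^ i)⁻¹) * b⁻¹ := by rw [pow_succ']; group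
        _ = b * a ^ (s ^ i) * b⁻¹ := by rw [ih]
        _ = (b * a * b⁻¹) ^ (s ^ i) := by rw [conj_pow]
        _ = a ^ (s ^ (i + 1)) := by rw [hb, ← pow_mul, ← pow_succ']
  have hconjk : ∀ i k : ℕ, b ^ i * a ^ k * (b ^ i)⁻¹ = a ^ (k * s ^ i) := by
    intro i k
    rw [← conj_pow, hconj i, ← pow_mul, Nat.mul_comm]
  have hform : ∀ k i : ℕ, (a ^ k * b) ^ i = a ^ (k * ∑ t ∈ range i, s ^ t) * b ^ i := by
    intro k i
    induction i with
    | zero => simp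
    | succ i ih =>
      calc (a ^ k * b) ^ (i + 1)
          = a ^ (k * ∑ t ∈ range i, s ^ t) * b ^ i * (a ^ k * b) := by rw [pow_succ, ih]
        _ = a ^ (k * ∑ t ∈ range i, s ^ t) * (b ^ i * a ^ k * (b ^ i)⁻¹) * (b ^ i * b) := by
            simp [mul_assoc]
        _ = a ^ (k * ∑ t ∈ range i, s ^ t) * a ^ (k * s ^ i) * (b ^ i * b) := by
            rw [hconjk]
        _ = a ^ (k * ∑ t ∈ range (i + 1), s ^ t) * b ^ (i + 1) := by
            rw [← pow_add, Finset.sum_range_succ, Nat.mul_add, pow_succ]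
  have inner : ∀ k : ZMod r, ∏ i : ZMod e, φ ((a ^ k.val * b) ^ i.val) n = 1 := by
    intro k
    refine fact1_aux φ e _ ?_ (hfab k.val (ZMod.val_lt k)) n
    obtain ⟨d, hd⟩ := hce
    rw [hform, hbe, mul_one, hd, show k.val * (r * d) = r * (k.val * d) by ring,
      pow_mul, ha, one_pow]
  have H1 : (∏ i : ZMod e, ∏ k : ZMod r, φ ((a ^ k.val * b) ^ i.val) n) = 1 := by
    rw [← Finset.prod_comm]
    exact Finset.prod_eq_one fun k _ => inner k
  have term_eq : ∀ (i : ZMod e) (k : ZMod r),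
      φ ((a ^ k.val * b) ^ i.val) n
        = φ (a ^ ((k * ((∑ t ∈ range i.val, s ^ t : ℕ) : ZMod r)).val)) (φ (b ^ i.val) n) := by
    intro i k
    have hexp : ∀ c : ℕ, (k.val * c) % r = (k * (c : ZMod r)).val := by
      intro c
      rw [ZMod.val_mul, ZMod.val_natCast]
      conv_lhs => rw [Nat.mul_mod]
      conv_rhs => rw [Nat.mul_mod]
      rw [Nat.mod_mod_of_dvd _ dvd_rfl]
    rw [hform, map_mul, MulAut.mul_apply, hpa (k.val * _), hexp]
  have outer : ∀ i : ZMod e, i ≠ 0 → ∏ k : ZMod r, φ ((a ^ k.val * b) ^ i.val) n = 1 := by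
    intro i hi
    have hival : 0 < i.val := Nat.pos_of_ne_zero (fun hz => hi ((ZMod.val_eq_zero i).mp hz))
    have hcne : ((∑ t ∈ range i.val, s ^ t : ℕ) : ZMod r) ≠ 0 := by
      intro hz
      exact hci i.val hival (ZMod.val_lt i) ((ZMod.natCast_eq_zero_iff _ r).mp hz)
    calc ∏ k : ZMod r, φ ((a ^ k.val * b) ^ i.val) n
        = ∏ k : ZMod r, φ (a ^ ((k * ((∑ t ∈ range i.val, s ^ t : ℕ) : ZMod r)).val))
            (φ (b ^ i.val) n) := Finset.prod_congr rfl fun k _ => term_eq i k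
      _ = ∏ k : ZMod r, φ (a ^ (k.val)) (φ (b ^ i.val) n) := by
          exact Equiv.prod_comp (Equiv.mulRight₀ _ hcne)
            (fun k => φ (a ^ (k.val)) (φ (b ^ i.val) n))
      _ = 1 := fact1_aux φ r a ha hfa _
  have h0 := (Fintype.prod_eq_single (0 : ZMod e) outer).symm.trans H1
  simp only [ZMod.val_zero, pow_zero, map_one, MulAut.one_apply, Finset.prod_const,
    Finset.card_univ, ZMod.card] at h0
  exact h0

end Abstract

open Finset

section Helpers

variable {G : Type*} [Group G] [Finite G]

lemma nocomm (h : ∀ g : G, ∃ ℓ n, ℓ.Prime ∧ orderOf g = ℓ ^ n)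
    {x y : G} (hc : Commute x y) (hx : x ≠ 1) (hy : y ≠ 1)
    {ℓ₁ ℓ₂ : ℕ} (h1 : ℓ₁.Prime) (h2 : ℓ₂.Prime)
    (d1 : ℓ₁ ∣ orderOf x) (d2 : ℓ₂ ∣ orderOf y) : ℓ₁ = ℓ₂ := by
  obtain ⟨px, nx, hpx, hox⟩ := h x
  obtain ⟨py, ny, hpy, hoy⟩ := h y
  have hx1 : orderOf x ≠ 1 := by simpa [orderOf_eq_one_iff] using hx
  have hy1 : orderOf y ≠ 1 := by simpa [orderOf_eq_one_iff] using hy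
  have hnx : nx ≠ 0 := by rintro rfl; simp [hox] at hx1
  have hny : ny ≠ 0 := by rintro rfl; simp [hoy] at hy1
  have e1 : ℓ₁ = px :=
    (Nat.prime_dvd_prime_iff_eq h1 hpx).mp (h1.dvd_of_dvd_pow (hox ▸ d1))
  have e2 : ℓ₂ = py :=
    (Nat.prime_dvd_prime_iff_eq h2 hpy).mp (h2.dvd_of_dvd_pow (hoy ▸ d2))
  by_contra hne
  have hpxy : px ≠ py := fun hpp => hne (by rw [e1, e2, hpp])
  have hco : Nat.Coprime (orderOf x) (orderOf y) := by
    rw [hox, hoy]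
    exact Nat.Coprime.pow nx ny ((Nat.coprime_primes hpx hpy).mpr hpxy)
  have hmul : orderOf (x * y) = orderOf x * orderOf y :=
    hc.orderOf_mul_eq_mul_orderOf_of_coprime hco
  obtain ⟨ℓ, n, hℓ, hxy⟩ := h (x * y)
  have hpxl : px = ℓ := by
    have : px ∣ ℓ ^ n := by
      rw [← hxy, hmul]
      exact Dvd.dvd.mul_right (hox ▸ dvd_pow_self px hnx) _
    exact (Nat.prime_dvd_prime_iff_eq hpx hℓ).mp (hpx.dvd_of_dvd_pow this)
  have hpyl : py = ℓ := by
    have : py ∣ ℓ ^ n := by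
      rw [← hxy, hmul]
      exact Dvd.dvd.mul_left (hoy ▸ dvd_pow_self py hny) _
    exact (Nat.prime_dvd_prime_iff_eq hpy hℓ).mp (hpy.dvd_of_dvd_pow this)
  exact hpxy (hpxl.trans hpyl.symm)

open scoped commutatorElement in
lemma exists_abelian_normal (K : Type*) [Group K] [Finite K] [Group.IsSolvable K] [Nontrivial K] :
    ∃ A : Subgroup K, A ≠ ⊥ ∧ A.Normal ∧ ∀ x ∈ A, ∀ y ∈ A, x * y = y * x := by
  classical
  obtain hsol := (isSolvable_def K).mp inferInstance
  set n₀ := Nat.find hsol with hn₀def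
  have hbot : derivedSeries K n₀ = ⊥ := Nat.find_spec hsol
  have hn₀ : n₀ ≠ 0 := by
    intro h0
    rw [h0, derivedSeries_zero] at hbot
    exact absurd hbot.symm bot_ne_top
  refine ⟨derivedSeries K (n₀ - 1), Nat.find_min hsol (Nat.pred_lt hn₀), derivedSeries_normal _ _, ?_⟩
  intro x hx y hy
  have h2 : derivedSeries K ((n₀ - 1) + 1) = ⊥ := by
    rwa [show n₀ - 1 + 1 = n₀ by omega]
  have hcomm : ⁅x, y⁆ ∈ (⊥ : Subgroup K) := by
    rw [← h2, derivedSeries_succ]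
    exact Subgroup.commutator_mem_commutator hx hy
  exact (commutatorElement_eq_one_iff_commute.mp (Subgroup.mem_bot.mp hcomm)).eq

lemma subgroup_prime (h : ∀ g : G, ∃ ℓ n, ℓ.Prime ∧ orderOf g = ℓ ^ n)
    (K : Subgroup G) (hK : K ≠ ⊥)
    (hab : ∀ x ∈ K, ∀ y ∈ K, x * y = y * x) :
    ∃ t : ℕ, t.Prime ∧ (∀ x ∈ K, x ≠ 1 → t ∣ orderOf x) := by
  obtain ⟨x₀, hx₀K, hx₀⟩ := (Subgroup.nontrivial_iff_exists_ne_one K).mp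
    ((Subgroup.nontrivial_iff_ne_bot K).mpr hK)
  obtain ⟨p0, n0, hp0, ho0⟩ := h x₀
  have hn0 : n0 ≠ 0 := by
    rintro rfl
    simp only [pow_zero, orderOf_eq_one_iff] at ho0
    exact hx₀ ho0
  refine ⟨p0, hp0, ?_⟩
  intro x hxK hx
  obtain ⟨p1, n1, hp1, ho1⟩ := h x
  have hn1 : n1 ≠ 0 := by
    rintro rfl
    simp only [pow_zero, orderOf_eq_one_iff] at ho1
    exact hx ho1
  have : p1 = p0 :=
    nocomm h (hab x hxK x₀ hx₀K) hx hx₀ hp1 hp0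
      (ho1 ▸ dvd_pow_self p1 hn1) (ho0 ▸ dvd_pow_self p0 hn0)
  rw [ho1, ← this]
  exact dvd_pow_self p1 hn1

end Helpers

section FinalStep

variable {G : Type*} [Group G] [Finite G]


lemma final_aux (h : ∀ g : G, ∃ ℓ n, ℓ.Prime ∧ orderOf g = ℓ ^ n)
    (N : Subgroup G) (hNn : N.Normal) (hNab : ∀ x ∈ N, ∀ y ∈ N, x * y = y * x)
    (hN0 : N ≠ ⊥) (p : ℕ) (hp : p.Prime) (hNp : ∀ x ∈ N, x ≠ 1 → p ∣ orderOf x)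
    (H : Subgroup G) (hHp : ¬ p ∣ Nat.card H)
    (A' : Subgroup G) (hA'H : A' ≤ H) (hA'0 : A' ≠ ⊥)
    (hA'ab : ∀ x ∈ A', ∀ y ∈ A', x * y = y * x)
    (hA'norm : ∀ g ∈ H, ∀ x ∈ A', g * x * g⁻¹ ∈ A')
    (r' q' : ℕ) (hr' : r'.Prime) (hq' : q'.Prime) (hqr : q' ≠ r')
    (hpr : p ≠ r')
    (hA'r : ∀ x ∈ A', x ≠ 1 → r' ∣ orderOf x)
    (hq'H : q' ∣ Nat.card H) : False := by
  haveI := hNn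
  haveI : Fact r'.Prime := ⟨hr'⟩
  haveI : Fact q'.Prime := ⟨hq'⟩
  -- fixed-point-freeness of nontrivial elements of H on N
  have hfpf : ∀ g ∈ H, g ≠ 1 → ∀ m ∈ N, g * m = m * g → m = 1 := by
    intro g hgH hg m hmN hc
    by_contra hm
    obtain ⟨ℓ, n, hℓ, hog⟩ := h g
    have hn : n ≠ 0 := by
      rintro rfl
      rw [pow_zero, orderOf_eq_one_iff] at hog
      exact hg hog
    have hℓg : ℓ ∣ orderOf g := hog ▸ dvd_pow_self ℓ hn
    have hℓp : ℓ = p := nocomm h hc hg hm hℓ hp hℓg (hNp m hmN hm)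
    exact hHp (hℓp ▸ dvd_trans hℓg (Subgroup.orderOf_dvd_natCard H hgH))
  letI : CommGroup ↥N :=
    { (inferInstance : Group ↥N) with
      mul_comm := fun x y => Subtype.ext (hNab x x.2 y y.2) }
  have hfix : ∀ g ∈ H, g ≠ 1 → ∀ m : ↥N, MulAut.conjNormal g m = m → m = 1 := by
    intro g hgH hg m hm
    have hcoe : g * ↑m * g⁻¹ = (↑m : G) := by
      rw [← MulAut.conjNormal_apply (H := N) g m, hm]
    have hcomm : g * ↑m = ↑m * g := by
      calc g * ↑m = (g * ↑m * g⁻¹) * g := by group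
        _ = ↑m * g := by rw [hcoe]
    exact Subtype.ext (hfpf g hgH hg ↑m m.2 hcomm)
  -- the subgroup Ω of elements of A' killed by r'
  set Ω : Subgroup G :=
    { carrier := {x | x ∈ A' ∧ x ^ r' = 1}
      one_mem' := ⟨A'.one_mem, one_pow r'⟩
      mul_mem' := by
        rintro x y ⟨hx, hx1⟩ ⟨hy, hy1⟩
        refine ⟨A'.mul_mem hx hy, ?_⟩
        rw [Commute.mul_pow (hA'ab x hx y hy), hx1, hy1, one_mul]
      inv_mem' := by
        rintro x ⟨hx, hx1⟩
        exact ⟨A'.inv_mem hx, by rw [inv_pow, hx1, inv_one]⟩ } with hΩdef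
  have hΩA : ∀ x, x ∈ Ω → x ∈ A' := fun x hx => hx.1
  have hΩpow : ∀ x, x ∈ Ω → x ^ r' = 1 := fun x hx => hx.2
  -- an element u of order r'
  have hrA' : r' ∣ Nat.card ↥A' := by
    obtain ⟨x₀, hx₀A, hx₀⟩ := (Subgroup.nontrivial_iff_exists_ne_one A').mp
      ((Subgroup.nontrivial_iff_ne_bot A').mpr hA'0)
    exact dvd_trans (hA'r x₀ hx₀A hx₀) (Subgroup.orderOf_dvd_natCard A' hx₀A)
  obtain ⟨u₀, hu₀⟩ := exists_prime_orderOf_dvd_card' (G := ↥A') r' hrA'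
  have huA : (u₀ : G) ∈ A' := u₀.2
  set u : G := ↑u₀ with hudef
  have huord : orderOf u = r' := by rw [Subgroup.orderOf_coe]; exact hu₀
  have hu1 : u ≠ 1 := by
    intro h1
    rw [h1, orderOf_one] at huord
    exact hr'.one_lt.ne huord
  have hur : u ^ r' = 1 := by rw [← huord]; exact pow_orderOf_eq_one u
  have huΩ : u ∈ Ω := ⟨huA, hur⟩
  -- the contradiction, given the key fact
  have contradiction : (∀ n ∈ N, n ^ r' = 1) → False := by
    intro key
    obtain ⟨n₀, hn₀N, hn₀⟩ := (Subgroup.nontrivial_iff_exists_ne_one N).mp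
      ((Subgroup.nontrivial_iff_ne_bot N).mpr hN0)
    have hdvd : orderOf n₀ ∣ r' := orderOf_dvd_of_pow_eq_one (key n₀ hn₀N)
    have hp0 : p ∣ orderOf n₀ := hNp n₀ hn₀N hn₀
    rcases hr'.eq_one_or_self_of_dvd (orderOf n₀) hdvd with h1 | h1
    · exact hn₀ (orderOf_eq_one_iff.mp h1)
    · rw [h1] at hp0
      exact hpr ((Nat.prime_dvd_prime_iff_eq hp hr').mp hp0)
  apply contradiction
  have coe_key : ∀ (n : G) (hn : n ∈ N), ((⟨n, hn⟩ : ↥N) ^ r' = 1) → n ^ r' = 1 := by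
    intro n hn hkey
    have := congrArg (Subgroup.subtype N) hkey
    simpa using this
  by_cases hcase : ∀ v, v ∈ Ω → v ∈ Subgroup.zpowers u
  · -- Ω is contained in ⟨u⟩ : use an element y of order q'
    obtain ⟨y₀, hy₀⟩ := exists_prime_orderOf_dvd_card' (G := ↥H) q' hq'H
    have hyH : (y₀ : G) ∈ H := y₀.2
    set y : G := ↑y₀ with hydef
    have hyord : orderOf y = q' := by rw [Subgroup.orderOf_coe]; exact hy₀
    have hy1 : y ≠ 1 := by
      intro h1
      rw [h1, orderOf_one] at hyord
      exact hq'.one_lt.ne hyord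
    have hyq : y ^ q' = 1 := by rw [← hyord]; exact pow_orderOf_eq_one y
    -- y u y⁻¹ ∈ Ω hence is a power of u
    have hwΩ : y * u * y⁻¹ ∈ Ω := by
      refine ⟨hA'norm y hyH u huA, ?_⟩
      rw [conj_pow, hur, mul_one, mul_inv_cancel]
    obtain ⟨m, hm⟩ := Subgroup.mem_zpowers_iff.mp (hcase _ hwΩ)
    set s : ℕ := (m % (r' : ℤ)).toNat with hsdef
    have hr'0 : (0 : ℤ) < (r' : ℤ) := by exact_mod_cast hr'.pos
    have hs : y * u * y⁻¹ = u ^ s := by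
      rw [← hm]
      have h1 : (u : G) ^ ((m % (r' : ℤ))) = u ^ m := by
        conv_rhs => rw [← zpow_mod_orderOf]
        rw [huord]
      rw [← h1, hsdef, ← zpow_natCast, Int.toNat_of_nonneg (Int.emod_nonneg m hr'0.ne')]
    -- u and y cannot commute
    have hsnot : u ^ s ≠ u := by
      intro hequ
      have hcuy : u * y = y * u := by
        have : y * u * y⁻¹ = u := by rw [hs, hequ]
        calc u * y = (y * u * y⁻¹) * y := by rw [this]
          _ = y * u := by group
      exact hqr ((nocomm h hcuy hu1 hy1 hr' hq' (huord ▸ dvd_refl r')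
        (hyord ▸ dvd_refl q')).symm)
    have hsb1 : ((s : ZMod r')) ≠ 1 := by
      intro h1
      apply hsnot
      have hmod : s ≡ 1 [MOD r'] := by
        have := (ZMod.natCast_eq_natCast_iff s 1 r').mp (by rw [h1, Nat.cast_one])
        exact this
      have : u ^ s = u ^ 1 := by
        rw [pow_eq_pow_iff_modEq, huord]
        exact hmod
      rwa [pow_one] at this
    -- iterated conjugation
    have hconj : ∀ i : ℕ, y ^ i * u * (y ^ i)⁻¹ = u ^ (s ^ i) := by
      intro i
      induction i with
      | zero => simp
      | succ i ih =>
        calc y ^ (i + 1) * u * (y ^ (i + 1))⁻¹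
            = y * (y ^ i * u * (y ^ i)⁻¹) * y⁻¹ := by rw [pow_succ']; group
          _ = y * u ^ (s ^ i) * y⁻¹ := by rw [ih]
          _ = (y * u * y⁻¹) ^ (s ^ i) := by rw [conj_pow]
          _ = u ^ (s ^ (i + 1)) := by rw [hs, ← pow_mul, ← pow_succ']
    have hsbq : ((s : ZMod r')) ^ q' = 1 := by
      have h2 := hconj q'
      rw [hyq] at h2
      simp only [one_mul, inv_one, mul_one] at h2
      have hmod : s ^ q' ≡ 1 [MOD r'] := by
        have h3 : u ^ (s ^ q') = u ^ 1 := by rw [pow_one]; exact h2.symm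
        have h4 := (pow_eq_pow_iff_modEq).mp h3
        rwa [huord] at h4
      calc ((s : ZMod r')) ^ q' = ((s ^ q' : ℕ) : ZMod r') := by push_cast; rfl
        _ = ((1 : ℕ) : ZMod r') := (ZMod.natCast_eq_natCast_iff _ _ _).mpr hmod
        _ = 1 := Nat.cast_one
    have hci : ∀ i, 0 < i → i < q' → ¬ r' ∣ ∑ t ∈ range i, s ^ t := by
      intro i hi0 hiq hdvd
      have hz : ((∑ t ∈ range i, s ^ t : ℕ) : ZMod r') = 0 :=
        (ZMod.natCast_eq_zero_iff _ _).mpr hdvd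
      push_cast at hz
      have hgeom := geom_sum_mul ((s : ZMod r')) i
      rw [hz, zero_mul] at hgeom
      have hsi : ((s : ZMod r')) ^ i = 1 := by
        have := sub_eq_zero.mp hgeom.symm
        exact this
      have d1 : orderOf ((s : ZMod r')) ∣ i := orderOf_dvd_of_pow_eq_one hsi
      have d2 : orderOf ((s : ZMod r')) ∣ q' := orderOf_dvd_of_pow_eq_one hsbq
      have hco : Nat.gcd q' i = 1 :=
        (Nat.Prime.coprime_iff_not_dvd hq').mpr (Nat.not_dvd_of_pos_of_lt hi0 hiq)
      have : orderOf ((s : ZMod r')) ∣ 1 := hco ▸ Nat.dvd_gcd d2 d1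
      exact hsb1 (orderOf_eq_one_iff.mp (Nat.dvd_one.mp this))
    have hce : r' ∣ ∑ t ∈ range q', s ^ t := by
      have hgeom := geom_sum_mul ((s : ZMod r')) q'
      rw [hsbq, sub_self] at hgeom
      have hz : (∑ t ∈ range q', ((s : ZMod r')) ^ t) = 0 := by
        rcases mul_eq_zero.mp hgeom with h1 | h2
        · exact h1
        · exact absurd (sub_eq_zero.mp h2) hsb1
      rw [← ZMod.natCast_eq_zero_iff]
      push_cast
      exact hz
    intro n hn
    refine coe_key n hn ?_
    refine CD_abstract (V := ↥N) (φ := MulAut.conjNormal) hr' hq'.pos hur hs hyq hci hce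
      (hfix u (hA'H huA) hu1) ?_ ⟨n, hn⟩
    intro k hk
    refine hfix (u ^ k * y) (H.mul_mem (H.pow_mem (hA'H huA) k) hyH) ?_
    intro h1
    have : y = (u ^ k)⁻¹ := by
      rw [← one_mul y⁻¹] at *
      calc y = (u ^ k)⁻¹ * (u ^ k * y) := by group
        _ = (u ^ k)⁻¹ := by rw [h1, mul_one]
    have hypow : y ^ r' = 1 := by
      rw [this, inv_pow, ← pow_mul, Nat.mul_comm, pow_mul, hur, one_pow, inv_one]
    have : q' ∣ r' := hyord ▸ orderOf_dvd_of_pow_eq_one hypow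
    exact hqr ((Nat.prime_dvd_prime_iff_eq hq' hr').mp this)
  · -- there is v ∈ Ω outside ⟨u⟩
    push_neg at hcase
    obtain ⟨v, hvΩ, hv⟩ := hcase
    have hvA : v ∈ A' := hΩA v hvΩ
    have hvr : v ^ r' = 1 := hΩpow v hvΩ
    have hcuv : u * v = v * u := hA'ab u huA v hvA
    intro n hn
    refine coe_key n hn ?_
    refine CD_abstract (V := ↥N) (φ := MulAut.conjNormal) (s := 1) hr' hr'.pos hur ?_ hvr ?_ ?_
      (hfix u (hA'H huA) hu1) ?_ ⟨n, hn⟩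
    · rw [pow_one, ← hcuv, mul_inv_cancel_right]
    · intro i hi0 hir
      simp only [one_pow, Finset.sum_const, Finset.card_range, smul_eq_mul, mul_one]
      exact Nat.not_dvd_of_pos_of_lt hi0 hir
    · simp
    · intro k hk
      refine hfix (u ^ k * v) (H.mul_mem (H.pow_mem (hA'H huA) k) (hA'H hvA)) ?_
      intro h1
      apply hv
      have : v = (u ^ k)⁻¹ := by
        calc v = (u ^ k)⁻¹ * (u ^ k * v) := by group
          _ = (u ^ k)⁻¹ := by rw [h1, mul_one]
      rw [this]
      exact Subgroup.inv_mem _ (Subgroup.pow_mem _ (Subgroup.mem_zpowers u) k)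

end FinalStep
universe u

lemma main_aux (c : ℕ) : ∀ (G : Type u) [Group G] [Finite G] [Group.IsSolvable G],
    Nat.card G ≤ c → (∀ g : G, ∃ ℓ n, ℓ.Prime ∧ orderOf g = ℓ ^ n) →
    (Nat.card G).primeFactors.card ≤ 2 := by
  induction c with
  | zero =>
    intro G _ _ _ hc h
    have := Nat.card_pos (α := G)
    omega
  | succ c ih =>
    intro G _ _ _ hc h
    rcases subsingleton_or_nontrivial G with hs | hnt
    · rw [Nat.card_unique]
      simp
    · by_contra hbig
      push_neg at hbig
      obtain ⟨N, hN0, hNn, hNab⟩ := exists_abelian_normal G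
      haveI := hNn
      obtain ⟨p, hp, hNp⟩ := subgroup_prime h N hN0 hNab
      have hcard : Nat.card ↥N * N.index = Nat.card G := Subgroup.card_mul_index N
      have hNgt1 : 1 < Nat.card ↥N := by
        rw [Finite.one_lt_card_iff_nontrivial]
        exact (Subgroup.nontrivial_iff_ne_bot N).mpr hN0
      have hidxpos : 0 < N.index := Nat.pos_of_ne_zero Subgroup.index_ne_zero_of_finite
      have hidxlt : N.index ≤ c := by
        have h2 : 2 * N.index ≤ Nat.card G := by
          calc 2 * N.index ≤ Nat.card ↥N * N.index := Nat.mul_le_mul_right _ hNgt1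
            _ = Nat.card G := hcard
        omega
      have hcardNp : ∀ ℓ : ℕ, ℓ.Prime → ℓ ∣ Nat.card ↥N → ℓ = p := by
        intro ℓ hℓp hℓd
        haveI : Fact ℓ.Prime := ⟨hℓp⟩
        obtain ⟨x, hx⟩ := exists_prime_orderOf_dvd_card' (G := ↥N) ℓ hℓd
        have hxo : orderOf (x : G) = ℓ := by rw [Subgroup.orderOf_coe]; exact hx
        have hx1 : (x : G) ≠ 1 := by
          intro h1x
          rw [h1x, orderOf_one] at hxo
          exact hℓp.one_lt.ne hxo
        have hpdvd : p ∣ orderOf (x : G) := hNp x x.2 hx1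
        rw [hxo] at hpdvd
        exact ((Nat.prime_dvd_prime_iff_eq hp hℓp).mp hpdvd).symm
      have hq : ∀ g : G ⧸ N, ∃ ℓ n, ℓ.Prime ∧ orderOf g = ℓ ^ n := by
        intro g
        obtain ⟨g₀, rfl⟩ := QuotientGroup.mk_surjective g
        obtain ⟨ℓ, n, hℓ, ho⟩ := h g₀
        have hdv : orderOf ((g₀ : G ⧸ N)) ∣ ℓ ^ n :=
          ho ▸ orderOf_map_dvd (QuotientGroup.mk' N) g₀
        rcases (Nat.dvd_prime_pow hℓ).mp hdv with ⟨m, _, hme⟩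
        exact ⟨ℓ, m, hℓ, hme⟩
      have hqcard := ih (G ⧸ N) (by rw [← Subgroup.index_eq_card]; exact hidxlt) hq
      set S := (Nat.card (G ⧸ N)).primeFactors with hSdef
      have hSidx : S = (N.index).primeFactors := by rw [hSdef, Subgroup.index_eq_card]
      have hsub : (Nat.card G).primeFactors ⊆ insert p S := by
        intro ℓ hℓ
        have hℓp : ℓ.Prime := Nat.prime_of_mem_primeFactors hℓ
        have hℓd : ℓ ∣ Nat.card G := Nat.dvd_of_mem_primeFactors hℓ
        rw [← hcard] at hℓd
        rcases (Nat.Prime.dvd_mul hℓp).mp hℓd with h1 | h2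
        · rw [hcardNp ℓ hℓp h1]
          exact Finset.mem_insert_self p S
        · refine Finset.mem_insert_of_mem ?_
          rw [hSidx]
          exact Nat.mem_primeFactors.mpr ⟨hℓp, h2, hidxpos.ne'⟩
      have hpS : p ∉ S := by
        intro hpS
        have hss : (Nat.card G).primeFactors ⊆ S := by
          rwa [Finset.insert_eq_self.mpr hpS] at hsub
        have := Finset.card_le_card hss
        omega
      have hScard : S.card = 2 := by
        have h3 := Finset.card_le_card hsub
        rw [Finset.card_insert_of_notMem hpS] at h3
        omega
      obtain ⟨q, r, hqr, hSqr⟩ := Finset.card_eq_two.mp hScard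
      have hq_mem : q ∈ S := by rw [hSqr]; simp
      have hr_mem : r ∈ S := by rw [hSqr]; simp
      rw [hSidx] at hq_mem hr_mem hpS
      have hqprime : q.Prime := Nat.prime_of_mem_primeFactors hq_mem
      have hrprime : r.Prime := Nat.prime_of_mem_primeFactors hr_mem
      have hqidx : q ∣ N.index := Nat.dvd_of_mem_primeFactors hq_mem
      have hridx : r ∣ N.index := Nat.dvd_of_mem_primeFactors hr_mem
      have hpidx : ¬ p ∣ N.index := fun hd =>
        hpS (Nat.mem_primeFactors.mpr ⟨hp, hd, hidxpos.ne'⟩)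
      have hcop : Nat.Coprime (Nat.card ↥N) N.index := by
        by_contra hncop
        obtain ⟨ℓ, hℓp, hℓd⟩ := Nat.exists_prime_and_dvd hncop
        have hd1 : ℓ ∣ Nat.card ↥N := hℓd.trans (Nat.gcd_dvd_left _ _)
        have hd2 : ℓ ∣ N.index := hℓd.trans (Nat.gcd_dvd_right _ _)
        exact hpidx (hcardNp ℓ hℓp hd1 ▸ hd2)
      obtain ⟨H, hH⟩ := Subgroup.exists_right_complement'_of_coprime hcop
      have hHcard : Nat.card ↥H = N.index := by
        have h2 := hH.card_mul
        have hNpos : 0 < Nat.card ↥N := Nat.card_pos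
        exact Nat.eq_of_mul_eq_mul_left hNpos (by rw [h2, ← hcard])
      have hHp : ¬ p ∣ Nat.card ↥H := by rw [hHcard]; exact hpidx
      have hqH : q ∣ Nat.card ↥H := by rw [hHcard]; exact hqidx
      have hrH : r ∣ Nat.card ↥H := by rw [hHcard]; exact hridx
      haveI : Nontrivial ↥H := by
        rw [← Finite.one_lt_card_iff_nontrivial]
        have h2 := Nat.le_of_dvd Nat.card_pos hqH
        have := hqprime.one_lt
        omega
      obtain ⟨A, hA0, hAn, hAab⟩ := exists_abelian_normal ↥H
      set A' : Subgroup G := A.map H.subtype with hA'def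
      have hA'H : A' ≤ H := Subgroup.map_subtype_le A
      have hA'0 : A' ≠ ⊥ := by
        intro hbot
        rw [hA'def, Subgroup.map_eq_bot_iff, Subgroup.ker_subtype, le_bot_iff] at hbot
        exact hA0 hbot
      have hA'ab : ∀ x ∈ A', ∀ y ∈ A', x * y = y * x := by
        intro x hx y hy
        obtain ⟨x₀, hx₀, rfl⟩ := Subgroup.mem_map.mp hx
        obtain ⟨y₀, hy₀, rfl⟩ := Subgroup.mem_map.mp hy
        have h2 := hAab x₀ hx₀ y₀ hy₀
        have h3 := congrArg H.subtype h2
        simpa using h3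
      have hA'norm : ∀ g ∈ H, ∀ x ∈ A', g * x * g⁻¹ ∈ A' := by
        intro g hg x hx
        obtain ⟨x₀, hx₀, rfl⟩ := Subgroup.mem_map.mp hx
        have h2 := hAn.conj_mem x₀ hx₀ ⟨g, hg⟩
        exact Subgroup.mem_map.mpr ⟨_, h2, rfl⟩
      obtain ⟨t, ht, hA't⟩ := subgroup_prime h A' hA'0 hA'ab
      have htidx : t ∣ N.index := by
        obtain ⟨x₀, hx₀A, hx₀⟩ := (Subgroup.nontrivial_iff_exists_ne_one A').mp
          ((Subgroup.nontrivial_iff_ne_bot A').mpr hA'0)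
        have h1 : t ∣ Nat.card ↥A' :=
          (hA't x₀ hx₀A hx₀).trans (Subgroup.orderOf_dvd_natCard A' hx₀A)
        have h2 : Nat.card ↥A' ∣ Nat.card ↥H := Subgroup.card_dvd_of_le hA'H
        exact (h1.trans h2).trans (hHcard ▸ dvd_refl _)
      have htS : t ∈ ({q, r} : Finset ℕ) := by
        rw [← hSqr, hSidx]
        exact Nat.mem_primeFactors.mpr ⟨ht, htidx, hidxpos.ne'⟩
      have hpt : p ≠ t := fun he => hpidx (he ▸ htidx)
      rcases Finset.mem_insert.mp htS with rfl | h2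
      · exact final_aux h N hNn hNab hN0 p hp hNp H hHp A' hA'H hA'0 hA'ab hA'norm
          t r ht hrprime (Ne.symm hqr) hpt hA't hrH
      · rw [Finset.mem_singleton] at h2
        subst h2
        exact final_aux h N hNn hNab hN0 p hp hNp H hHp A' hA'H hA'0 hA'ab hA'norm
          t q ht hqprime hqr hpt hA't hqH

theorem primeFactors_card_le_two_of_solvable_prime_power_orders
    (G : Type*) [Group G] [Finite G] [Group.IsSolvable G]
    (h : ∀ g : G, ∃ (ℓ : ℕ) (n : ℕ), ℓ.Prime ∧ orderOf g = ℓ ^ n) :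
    (Nat.card G).primeFactors.card ≤ 2 := by
  exact main_aux (Nat.card G) G le_rfl h
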